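/- For fixed 0 < σ_S < σ_D, the function φ(c) = erf(c/(√2 σ_S)) − erf(c/(√2 σ_D)) over c > 0 attains its unique maximum at c = ε_eq = σ_D·√(2 ln(σ_D/σ_S)/((σ_D/σ_S)² − 1)). -/

import Mathlib

/-- The Gauss error function `erf x = (1/√π) ∫_{-x}^{x} e^{-t²} dt`. -/
noncomputable def erf (x : ℝ) : ℝ :=
  (Real.sqrt Real.pi)⁻¹ * ∫ t in (-x)..x, Real.exp (-t ^ 2)

lemma f_cont : Continuous fun t : ℝ => Real.exp (-t ^ 2) := by continuity

lemma E_hasDerivAt (x : ℝ) :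
    HasDerivAt (fun y : ℝ => ∫ t in (0:ℝ)..y, Real.exp (-t ^ 2)) (Real.exp (-x ^ 2)) x :=
  intervalIntegral.integral_hasDerivAt_right (f_cont.intervalIntegrable _ _)
    (f_cont.stronglyMeasurableAtFilter _ _) f_cont.continuousAt

lemma erf_eq (x : ℝ) : erf x = (Real.sqrt Real.pi)⁻¹ *
    ((∫ t in (0:ℝ)..x, Real.exp (-t ^ 2)) - ∫ t in (0:ℝ)..(-x), Real.exp (-t ^ 2)) := by
  unfold erf
  congr 1
  rw [← intervalIntegral.integral_add_adjacent_intervals (a := -x) (b := 0) (c := x)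
      (f_cont.intervalIntegrable _ _) (f_cont.intervalIntegrable _ _),
    intervalIntegral.integral_symm]
  ring

lemma erf_hasDerivAt (x : ℝ) :
    HasDerivAt erf ((Real.sqrt Real.pi)⁻¹ * (2 * Real.exp (-x ^ 2))) x := by
  have h1 := E_hasDerivAt x
  have h2 := (E_hasDerivAt (-x)).comp x (hasDerivAt_neg x)
  have h3 := (h1.sub h2).const_mul (Real.sqrt Real.pi)⁻¹
  have heq : erf = fun x => (Real.sqrt Real.pi)⁻¹ *
      ((∫ t in (0:ℝ)..x, Real.exp (-t ^ 2)) - ∫ t in (0:ℝ)..(-x), Real.exp (-t ^ 2)) :=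
    funext erf_eq
  rw [heq]
  convert h3 using 1
  · rfl
  · rfl
  · rfl
  rw [neg_sq]
  ring

lemma phi_hasDerivAt (σS σD : ℝ) (hσS : 0 < σS) (hσD : 0 < σD) (c : ℝ) :
    HasDerivAt (fun c => erf (c / (Real.sqrt 2 * σS)) - erf (c / (Real.sqrt 2 * σD)))
      ((Real.sqrt Real.pi)⁻¹ * (Real.sqrt 2)⁻¹ * 2 *
        (Real.exp (-c ^ 2 / (2 * σS ^ 2)) / σS - Real.exp (-c ^ 2 / (2 * σD ^ 2)) / σD)) c := by
  have h2 : (0:ℝ) < Real.sqrt 2 := Real.sqrt_pos.2 (by norm_num)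
  have hs2 : Real.sqrt 2 ^ 2 = 2 := Real.sq_sqrt (by norm_num)
  have hS := (erf_hasDerivAt (c / (Real.sqrt 2 * σS))).comp c
    ((hasDerivAt_id c).div_const (Real.sqrt 2 * σS))
  have hD := (erf_hasDerivAt (c / (Real.sqrt 2 * σD))).comp c
    ((hasDerivAt_id c).div_const (Real.sqrt 2 * σD))
  have hsq : ∀ σ : ℝ, 0 < σ → (c / (Real.sqrt 2 * σ)) ^ 2 = c ^ 2 / (2 * σ ^ 2) := by
    intro σ hσ
    rw [div_pow, mul_pow, hs2]
  have := hS.sub hD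
  convert this using 1
  · rfl
  · rfl
  · rfl
  rw [hsq σS hσS, hsq σD hσD, neg_div, neg_div]
  field_simp

theorem threshold_advantage_unique_max
    (σS σD : ℝ) (hσS : 0 < σS) (hσ : σS < σD) :
    let φ : ℝ → ℝ := fun c =>
      erf (c / (Real.sqrt 2 * σS)) - erf (c / (Real.sqrt 2 * σD))
    let εeq : ℝ := σD * Real.sqrt (2 * Real.log (σD / σS) / ((σD / σS) ^ 2 - 1))
    (∀ c : ℝ, 0 < c → φ c ≤ φ εeq) ∧
    (∀ c : ℝ, 0 < c → c ≠ εeq → φ c < φ εeq) := by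
  intro φ εeq
  have hσD : 0 < σD := hσS.trans hσ
  have hr : 1 < σD / σS := (one_lt_div hσS).2 hσ
  have hL : 0 < Real.log (σD / σS) := Real.log_pos hr
  have hden : 0 < (σD / σS) ^ 2 - 1 := by nlinarith
  have harg : 0 < 2 * Real.log (σD / σS) / ((σD / σS) ^ 2 - 1) := by positivity
  have hε : 0 < εeq := mul_pos hσD (Real.sqrt_pos.2 harg)
  have hA : 0 < 1 / (2 * σS ^ 2) - 1 / (2 * σD ^ 2) := by
    have h1 : (0:ℝ) < 2 * σS ^ 2 := by positivity
    have h2 : 2 * σS ^ 2 < 2 * σD ^ 2 := by nlinarith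
    exact sub_pos.2 (one_div_lt_one_div_of_lt h1 h2)
  have hεsq : εeq ^ 2 * (1 / (2 * σS ^ 2) - 1 / (2 * σD ^ 2)) =
      Real.log σD - Real.log σS := by
    have h1 : εeq ^ 2 = σD ^ 2 * (2 * Real.log (σD / σS) / ((σD / σS) ^ 2 - 1)) := by
      show (σD * _) ^ 2 = _
      rw [mul_pow, Real.sq_sqrt harg.le]
    have hss : σD ^ 2 - σS ^ 2 ≠ 0 := ne_of_gt (by nlinarith)
    have h2 : (σD / σS) ^ 2 - 1 = (σD ^ 2 - σS ^ 2) / σS ^ 2 := by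
      field_simp
    rw [h1, Real.log_div hσD.ne' hσS.ne', h2]
    field_simp
  -- the sign bracket
  set D : ℝ → ℝ := fun c =>
    Real.exp (-c ^ 2 / (2 * σS ^ 2)) / σS - Real.exp (-c ^ 2 / (2 * σD ^ 2)) / σD with hDdef
  have hcalc : ∀ c : ℝ, D c = Real.exp (-c ^ 2 / (2 * σS ^ 2) - Real.log σS) -
      Real.exp (-c ^ 2 / (2 * σD ^ 2) - Real.log σD) := by
    intro c
    rw [hDdef]
    simp only [Real.exp_sub, Real.exp_log hσS, Real.exp_log hσD]
  have keyP : ∀ c : ℝ, 0 ≤ c → c < εeq → 0 < D c := by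
    intro c hc hlt
    rw [hcalc, sub_pos, Real.exp_lt_exp]
    have hc2 : c ^ 2 < εeq ^ 2 := by nlinarith
    have := mul_lt_mul_of_pos_right hc2 hA
    rw [hεsq] at this
    have hexp : c ^ 2 * (1 / (2 * σS ^ 2) - 1 / (2 * σD ^ 2)) =
        c ^ 2 / (2 * σS ^ 2) - c ^ 2 / (2 * σD ^ 2) := by ring
    rw [hexp] at this
    rw [neg_div, neg_div]
    linarith [this]
  have keyN : ∀ c : ℝ, εeq < c → D c < 0 := by
    intro c hlt
    rw [hcalc, sub_neg, Real.exp_lt_exp]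
    have hc2 : εeq ^ 2 < c ^ 2 := by nlinarith
    have := mul_lt_mul_of_pos_right hc2 hA
    rw [hεsq] at this
    have hexp : c ^ 2 * (1 / (2 * σS ^ 2) - 1 / (2 * σD ^ 2)) =
        c ^ 2 / (2 * σS ^ 2) - c ^ 2 / (2 * σD ^ 2) := by ring
    rw [hexp] at this
    rw [neg_div, neg_div]
    linarith [this]
  set K : ℝ := (Real.sqrt Real.pi)⁻¹ * (Real.sqrt 2)⁻¹ * 2 with hKdef
  have hK : 0 < K := by
    have h1 : (0:ℝ) < Real.sqrt Real.pi := Real.sqrt_pos.2 Real.pi_pos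
    have h2 : (0:ℝ) < Real.sqrt 2 := Real.sqrt_pos.2 (by norm_num)
    positivity
  have hφd : ∀ c : ℝ, HasDerivAt φ (K * D c) c := by
    intro c
    have := phi_hasDerivAt σS σD hσS hσD c
    convert this using 1
  have hderiv : ∀ c : ℝ, deriv φ c = K * D c := fun c => (hφd c).deriv
  have hdiff : Differentiable ℝ φ := fun c => (hφd c).differentiableAt
  have hcont : Continuous φ := hdiff.continuous
  have mono : StrictMonoOn φ (Set.Icc 0 εeq) := by
    apply strictMonoOn_of_deriv_pos (convex_Icc 0 εeq) hcont.continuousOn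
    intro x hx
    rw [interior_Icc] at hx
    rw [hderiv]
    exact mul_pos hK (keyP x hx.1.le hx.2)
  have anti : StrictAntiOn φ (Set.Ici εeq) := by
    apply strictAntiOn_of_deriv_neg (convex_Ici εeq) hcont.continuousOn
    intro x hx
    rw [interior_Ici] at hx
    rw [hderiv]
    exact mul_neg_of_pos_of_neg hK (keyN x hx)
  constructor
  · intro c hc
    rcases lt_trichotomy c εeq with h | h | h
    · exact (mono ⟨hc.le, h.le⟩ ⟨hε.le, le_rfl⟩ h).le
    · rw [h]
    · exact (anti (Set.mem_Ici.2 le_rfl) h.le h).le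
  · intro c hc hne
    rcases lt_trichotomy c εeq with h | h | h
    · exact mono ⟨hc.le, h.le⟩ ⟨hε.le, le_rfl⟩ h
    · exact absurd h hne
    · exact anti (Set.mem_Ici.2 le_rfl) h.le h
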